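/- For any n-qubit density matrix ρ, the state inversion inequality Σ_{k=0}^n (−1)^k A_k(ρ) ≥ 0 holds. -/

import Mathlib

open Matrix BigOperators Finset ComplexOrder

/-- The Pauli matrices, indexed by `Fin 4`: identity, X, Y, Z. -/
noncomputable def pauli : Fin 4 → Matrix (Fin 2) (Fin 2) ℂ
  | 0 => 1
  | 1 => !![0, 1; 1, 0]
  | 2 => !![0, -Complex.I; Complex.I, 0]
  | 3 => !![1, 0; 0, -1]

/-- An `n`-qubit Pauli word: the tensor product of the Pauli matrices `pauli (w i)`,
realized as a matrix indexed by `Fin n → Fin 2`. -/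
noncomputable def pWord {n : ℕ} (w : Fin n → Fin 4) :
    Matrix (Fin n → Fin 2) (Fin n → Fin 2) ℂ :=
  Matrix.of fun x y => ∏ i, pauli (w i) (x i) (y i)

/-- The weight of a Pauli word: the number of non-identity tensor factors. -/
def wt {n : ℕ} (w : Fin n → Fin 4) : ℕ :=
  (Finset.univ.filter fun i => w i ≠ 0).card

/-- The `k`-th sector length of an `n`-qubit matrix:
the sum of squared Pauli expectation values over Pauli words of weight `k`. -/
noncomputable def sector (n k : ℕ) (ρ : Matrix (Fin n → Fin 2) (Fin n → Fin 2) ℂ) : ℝ :=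
  ∑ w ∈ Finset.univ.filter fun w : Fin n → Fin 4 => wt w = k,
    ((pWord w * ρ).trace.re) ^ 2

/-- An `n`-qubit quantum state: positive semidefinite with unit trace. -/
def IsState {n : ℕ} (ρ : Matrix (Fin n → Fin 2) (Fin n → Fin 2) ℂ) : Prop :=
  ρ.PosSemidef ∧ ρ.trace = 1

noncomputable def eps : Fin 4 → ℂ := fun s => if s = 0 then 1 else -1

def bflip : Fin 2 → Fin 2 := fun a => a + 1

lemma bflip_bflip (a : Fin 2) : bflip (bflip a) = a := by fin_cases a <;> rfl

def flipAll {n : ℕ} (x : Fin n → Fin 2) : Fin n → Fin 2 := fun i => bflip (x i)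

lemma flipAll_flipAll {n : ℕ} (x : Fin n → Fin 2) : flipAll (flipAll x) = x :=
  funext fun i => bflip_bflip (x i)

noncomputable def sgn {n : ℕ} (x : Fin n → Fin 2) : ℂ := ∏ i, (-1 : ℂ) ^ ((x i : ℕ))

lemma sgn_conj {n : ℕ} (x : Fin n → Fin 2) : starRingEnd ℂ (sgn x) = sgn x := by
  simp [sgn]

noncomputable def Ninv {n : ℕ} (ρ : Matrix (Fin n → Fin 2) (Fin n → Fin 2) ℂ) :
    Matrix (Fin n → Fin 2) (Fin n → Fin 2) ℂ :=
  Matrix.of fun a b => sgn a * sgn b * ρ (flipAll b) (flipAll a)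

lemma eps_prod {n : ℕ} (w : Fin n → Fin 4) : ∏ i, eps (w i) = (-1 : ℂ) ^ (wt w) := by
  unfold eps wt
  rw [Finset.prod_ite, Finset.prod_const, Finset.prod_const]
  simp

lemma key (a b c d : Fin 2) :
    ∑ s : Fin 4, eps s * pauli s a b * pauli s c d
      = if c = bflip a ∧ d = bflip b then 2 * (-1 : ℂ) ^ ((a : ℕ) + (b : ℕ)) else 0 := by
  fin_cases a <;> fin_cases b <;> fin_cases c <;> fin_cases d <;>
    simp [eps, pauli, Fin.sum_univ_four, bflip, Matrix.one_apply, Complex.ext_iff] <;>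
    norm_num

lemma pauli_conj (s : Fin 4) (a b : Fin 2) :
    starRingEnd ℂ (pauli s a b) = pauli s b a := by
  fin_cases s <;> fin_cases a <;> fin_cases b <;>
    simp [pauli, Matrix.one_apply]

lemma pWord_herm {n : ℕ} (w : Fin n → Fin 4) : (pWord w).IsHermitian := by
  ext x y
  simp only [Matrix.conjTranspose_apply, pWord, Matrix.of_apply, RCLike.star_def, map_prod]
  simp [pauli_conj]

lemma trace_real {n : ℕ} {ρ : Matrix (Fin n → Fin 2) (Fin n → Fin 2) ℂ}
    (hH : ρ.IsHermitian) (w : Fin n → Fin 4) : ((pWord w * ρ).trace).im = 0 := by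
  have h : star ((pWord w * ρ).trace) = (pWord w * ρ).trace := by
    rw [← Matrix.trace_conjTranspose, Matrix.conjTranspose_mul, hH.eq, (pWord_herm w).eq,
      Matrix.trace_mul_comm]
  have := Complex.conj_eq_iff_im.mp h
  exact this

lemma psd_diag_nonneg {m : Type*} [Fintype m] [DecidableEq m]
    {A : Matrix m m ℂ} (hA : A.PosSemidef) (i : m) : 0 ≤ A i i := by
  have h := hA.dotProduct_mulVec_nonneg (Pi.single i 1)
  simpa [dotProduct, Matrix.mulVec, Pi.single_apply, Finset.sum_ite_eq,
    Finset.sum_ite_eq'] using h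

lemma trace_mul_psd_nonneg {m : Type*} [Fintype m] [DecidableEq m]
    {A B : Matrix m m ℂ} (hA : A.PosSemidef) (hB : B.PosSemidef) :
    0 ≤ (A * B).trace := by
  open scoped MatrixOrder in
  obtain ⟨C, rfl⟩ := CStarAlgebra.nonneg_iff_eq_star_mul_self.mp hA.nonneg
  rw [Matrix.mul_assoc, Matrix.trace_mul_comm]
  rw [Matrix.mul_assoc]
  have hP : (C * (B * Cᴴ)).PosSemidef := by
    have := hB.mul_mul_conjTranspose_same C
    rwa [Matrix.mul_assoc] at this
  exact Finset.sum_nonneg fun i _ => psd_diag_nonneg hP i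

lemma herm_apply {n : ℕ} {ρ : Matrix (Fin n → Fin 2) (Fin n → Fin 2) ℂ}
    (hH : ρ.IsHermitian) (a b : Fin n → Fin 2) :
    starRingEnd ℂ (ρ a b) = ρ b a := by
  have := congrFun (congrFun hH.eq b) a
  simpa [Matrix.conjTranspose_apply] using this

lemma flip_sum {n : ℕ} (F : (Fin n → Fin 2) → ℂ) :
    ∑ p, F (flipAll p) = ∑ p, F p :=
  Fintype.sum_bijective flipAll (Function.Involutive.bijective flipAll_flipAll) _ F fun _ => rfl

lemma Ninv_psd {n : ℕ} {ρ : Matrix (Fin n → Fin 2) (Fin n → Fin 2) ℂ}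
    (hρ : ρ.PosSemidef) : (Ninv ρ).PosSemidef := by
  rw [Matrix.posSemidef_iff_dotProduct_mulVec]
  constructor
  · ext a b
    simp only [Matrix.conjTranspose_apply, Ninv, Matrix.of_apply, RCLike.star_def, _root_.map_mul,
      sgn_conj, herm_apply hρ.1]
    ring
  · intro v
    have hform : star v ⬝ᵥ Ninv ρ *ᵥ v
        = star (fun c => sgn (flipAll c) * starRingEnd ℂ (v (flipAll c)))
            ⬝ᵥ ρ *ᵥ (fun c => sgn (flipAll c) * starRingEnd ℂ (v (flipAll c))) := by
      simp only [dotProduct, Matrix.mulVec, Pi.star_apply, Ninv, Matrix.of_apply,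
        Finset.mul_sum, RCLike.star_def]
      rw [Finset.sum_comm]
      rw [← flip_sum]
      refine Finset.sum_congr rfl fun b _ => ?_
      rw [← flip_sum]
      refine Finset.sum_congr rfl fun a _ => ?_
      simp only [flipAll_flipAll, _root_.map_mul, sgn_conj, Complex.conj_conj]
      ring
    rw [hform]
    exact hρ.dotProduct_mulVec_nonneg _

lemma main_id {n : ℕ} (ρ : Matrix (Fin n → Fin 2) (Fin n → Fin 2) ℂ) :
    ∑ w : Fin n → Fin 4, (-1 : ℂ) ^ (wt w) * ((pWord w * ρ).trace) ^ 2
      = 2 ^ n * (ρ * Ninv ρ).trace := by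
  classical
  have htr : ∀ w : Fin n → Fin 4, (pWord w * ρ).trace
      = ∑ p : (Fin n → Fin 2) × (Fin n → Fin 2),
          (∏ i, pauli (w i) (p.1 i) (p.2 i)) * ρ p.2 p.1 := by
    intro w
    simp only [Matrix.trace, Matrix.diag_apply, Matrix.mul_apply, pWord, Matrix.of_apply]
    rw [← Fintype.sum_prod_type']
  have hsplit : ∀ w : Fin n → Fin 4, (-1 : ℂ) ^ (wt w) * ((pWord w * ρ).trace) ^ 2
      = ∑ z : ((Fin n → Fin 2) × (Fin n → Fin 2)) × ((Fin n → Fin 2) × (Fin n → Fin 2)),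
          (ρ z.1.2 z.1.1 * ρ z.2.2 z.2.1) *
            ∏ i, (eps (w i) * pauli (w i) (z.1.1 i) (z.1.2 i) * pauli (w i) (z.2.1 i) (z.2.2 i)) := by
    intro w
    rw [← eps_prod, htr w, sq, Finset.sum_mul_sum, ← Fintype.sum_prod_type', Finset.mul_sum]
    refine Finset.sum_congr rfl fun z _ => ?_
    rw [Finset.prod_mul_distrib, Finset.prod_mul_distrib]
    ring
  calc ∑ w : Fin n → Fin 4, (-1 : ℂ) ^ (wt w) * ((pWord w * ρ).trace) ^ 2
      = ∑ w : Fin n → Fin 4,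
          ∑ z : ((Fin n → Fin 2) × (Fin n → Fin 2)) × ((Fin n → Fin 2) × (Fin n → Fin 2)),
          (ρ z.1.2 z.1.1 * ρ z.2.2 z.2.1) *
            ∏ i, (eps (w i) * pauli (w i) (z.1.1 i) (z.1.2 i) * pauli (w i) (z.2.1 i) (z.2.2 i)) :=
        Finset.sum_congr rfl fun w _ => hsplit w
    _ = ∑ z : ((Fin n → Fin 2) × (Fin n → Fin 2)) × ((Fin n → Fin 2) × (Fin n → Fin 2)),
          (ρ z.1.2 z.1.1 * ρ z.2.2 z.2.1) *
          ∑ w : Fin n → Fin 4,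
            ∏ i, (eps (w i) * pauli (w i) (z.1.1 i) (z.1.2 i) * pauli (w i) (z.2.1 i) (z.2.2 i)) := by
        rw [Finset.sum_comm]
        exact Finset.sum_congr rfl fun z _ => (Finset.mul_sum _ _ _).symm
    _ = ∑ z : ((Fin n → Fin 2) × (Fin n → Fin 2)) × ((Fin n → Fin 2) × (Fin n → Fin 2)),
          (ρ z.1.2 z.1.1 * ρ z.2.2 z.2.1) *
          ∏ i, ∑ s : Fin 4, (eps s * pauli s (z.1.1 i) (z.1.2 i) * pauli s (z.2.1 i) (z.2.2 i)) := by
        refine Finset.sum_congr rfl fun z _ => ?_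
        congr 1
        rw [Finset.prod_univ_sum]
        simp [Fintype.piFinset_univ]
    _ = ∑ z : ((Fin n → Fin 2) × (Fin n → Fin 2)) × ((Fin n → Fin 2) × (Fin n → Fin 2)),
          (ρ z.1.2 z.1.1 * ρ z.2.2 z.2.1) *
          if z.2 = (flipAll z.1.1, flipAll z.1.2) then
            ∏ i, (2 * (-1 : ℂ) ^ ((z.1.1 i : ℕ) + (z.1.2 i : ℕ))) else 0 := by
        refine Finset.sum_congr rfl fun z _ => ?_
        congr 1
        simp_rw [key]
        rw [Fintype.prod_ite_zero]
        congr 1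
        exact propext ⟨fun h => Prod.ext_iff.mpr ⟨funext fun i => (h i).1, funext fun i => (h i).2⟩,
          fun h i => by rw [h]; exact ⟨rfl, rfl⟩⟩
    _ = ∑ p : (Fin n → Fin 2) × (Fin n → Fin 2),
          (ρ p.2 p.1 * ρ (flipAll p.2) (flipAll p.1)) *
            ∏ i, (2 * (-1 : ℂ) ^ ((p.1 i : ℕ) + (p.2 i : ℕ))) := by
        rw [Fintype.sum_prod_type]
        refine Finset.sum_congr rfl fun p _ => ?_
        rw [Finset.sum_eq_single (flipAll p.1, flipAll p.2)]
        · simp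
        · intro q _ hq
          simp [hq]
        · intro h
          exact absurd (Finset.mem_univ _) h
    _ = 2 ^ n * (ρ * Ninv ρ).trace := by
        simp only [Matrix.trace, Matrix.diag_apply, Matrix.mul_apply, Ninv, Matrix.of_apply,
          Finset.mul_sum]
        rw [← Fintype.sum_prod_type']
        refine Fintype.sum_equiv (Equiv.prodComm _ _) _ _ fun p => ?_
        simp only [Equiv.prodComm_apply, Prod.swap, Prod.fst, Prod.snd]
        rw [Finset.prod_mul_distrib, Finset.prod_const]
        simp only [Finset.card_univ, Fintype.card_fin]
        simp_rw [pow_add]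
        rw [Finset.prod_mul_distrib]
        show (ρ p.2 p.1 * ρ (flipAll p.2) (flipAll p.1)) * (2 ^ n * (sgn p.1 * sgn p.2))
          = 2 ^ n * (ρ p.2 p.1 * (sgn p.1 * sgn p.2 * ρ (flipAll p.2) (flipAll p.1)))
        ring


lemma wt_le {n : ℕ} (w : Fin n → Fin 4) : wt w ≤ n := by
  unfold wt
  calc (Finset.univ.filter fun i => w i ≠ 0).card ≤ Finset.univ.card := Finset.card_filter_le _ _
  _ = n := by simp


/-- The state inversion inequality: for any `n`-qubit state,
`∑_{k=0}^n (−1)^k A_k(ρ) ≥ 0`. -/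
theorem state_inversion_inequality (n : ℕ)
    (ρ : Matrix (Fin n → Fin 2) (Fin n → Fin 2) ℂ) (hρ : IsState ρ) :
    0 ≤ ∑ k ∈ Finset.range (n + 1), (-1 : ℝ) ^ k * sector n k ρ := by
  classical
  obtain ⟨hpsd, -⟩ := hρ
  have h1 : ∑ k ∈ Finset.range (n + 1), (-1 : ℝ) ^ k * sector n k ρ
      = ∑ w : Fin n → Fin 4, (-1 : ℝ) ^ (wt w) * ((pWord w * ρ).trace.re) ^ 2 := by
    have h0 := Finset.sum_fiberwise_of_maps_to (s := (Finset.univ : Finset (Fin n → Fin 4)))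
      (t := Finset.range (n + 1)) (g := wt)
      (fun w _ => Finset.mem_range.mpr (Nat.lt_succ_of_le (wt_le w)))
      (fun w => (-1 : ℝ) ^ (wt w) * ((pWord w * ρ).trace.re) ^ 2)
    rw [← h0]
    refine Finset.sum_congr rfl fun k _ => ?_
    rw [sector, Finset.mul_sum]
    refine Finset.sum_congr rfl fun w hw => ?_
    rw [(Finset.mem_filter.mp hw).2]
  have h2 : ∀ w : Fin n → Fin 4, (-1 : ℝ) ^ (wt w) * ((pWord w * ρ).trace.re) ^ 2
      = ((-1 : ℂ) ^ (wt w) * ((pWord w * ρ).trace) ^ 2).re := by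
    intro w
    have him := trace_real hpsd.1 w
    rw [show ((-1 : ℂ)) = (((-1 : ℝ) : ℂ)) by norm_num, ← Complex.ofReal_pow,
      Complex.re_ofReal_mul, sq, sq, Complex.mul_re, him]
    ring
  have h3 : (0 : ℂ) ≤ 2 ^ n * (ρ * Ninv ρ).trace :=
    mul_nonneg (pow_nonneg (by norm_num) n) (trace_mul_psd_nonneg hpsd (Ninv_psd hpsd))
  rw [h1]
  simp_rw [h2]
  rw [← Complex.re_sum, main_id ρ]
  exact (Complex.nonneg_iff.mp h3).1
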